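/- Let q be odd with gcd(p,q) = 1, and φ : ℝ → ℂ be 1-periodic with Fourier coefficients φ̂_k satisfying ∑_k k²|φ̂_k| < ∞. Then g_φ(p,q) = g_1(p,q) · G_φ(-\overline{4p}/q), where G_φ(x) = ∑_{n∈ℤ} φ̂_n e^{2πi n² x} and \overline{4p} is the inverse of 4p mod q. -/

import Mathlib

open Finset Complex Real

noncomputable def Efun (q : ℕ) (x : ℤ) : ℂ :=
  Complex.exp (2 * Real.pi * Complex.I * (x : ℂ) / (q : ℂ))

lemma Efun_add (q : ℕ) (x y : ℤ) : Efun q (x + y) = Efun q x * Efun q y := by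
  rw [Efun, Efun, Efun, ← Complex.exp_add]
  congr 1
  push_cast
  ring

lemma Efun_qmul (q : ℕ) (hq : q ≠ 0) (m : ℤ) : Efun q ((q : ℤ) * m) = 1 := by
  have hqC : (q : ℂ) ≠ 0 := Nat.cast_ne_zero.mpr hq
  rw [Efun]
  have h : 2 * (Real.pi : ℂ) * Complex.I * (((q : ℤ) * m : ℤ) : ℂ) / (q : ℂ)
      = (m : ℂ) * (2 * (Real.pi : ℂ) * Complex.I) := by
    push_cast
    field_simp
  rw [h, Complex.exp_int_mul_two_pi_mul_I]

noncomputable def Ffun (q : ℕ) [NeZero q] (a : ZMod q) : ℂ := Efun q (a.val : ℤ)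

lemma Ffun_intCast (q : ℕ) [NeZero q] (x : ℤ) : Ffun q (x : ZMod q) = Efun q x := by
  obtain ⟨m, hm⟩ : (q : ℤ) ∣ x - ((x : ZMod q).val : ℤ) := by
    apply (ZMod.intCast_zmod_eq_zero_iff_dvd _ q).mp
    push_cast
    simp
  have hx : x = ((x : ZMod q).val : ℤ) + (q : ℤ) * m := by linarith
  calc Ffun q (x : ZMod q) = Efun q ((x : ZMod q).val : ℤ) := rfl
    _ = Efun q ((x : ZMod q).val : ℤ) * Efun q ((q : ℤ) * m) := by
        rw [Efun_qmul q (NeZero.ne q), mul_one]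
    _ = Efun q x := by rw [← Efun_add, ← hx]

lemma Ffun_add (q : ℕ) [NeZero q] (a b : ZMod q) :
    Ffun q (a + b) = Ffun q a * Ffun q b := by
  have ha : ((a.val : ℤ) : ZMod q) = a := by push_cast; simp
  have hb : ((b.val : ℤ) : ZMod q) = b := by push_cast; simp
  have key : a + b = (((a.val : ℤ) + (b.val : ℤ) : ℤ) : ZMod q) := by
    push_cast [ha, hb]
    rfl
  rw [key, Ffun_intCast, Efun_add, ← Ffun_intCast q (a.val : ℤ), ← Ffun_intCast q (b.val : ℤ),
    ha, hb]

lemma sum_zmod_eq (q : ℕ) [NeZero q] (f : ZMod q → ℂ) :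
    ∑ a : ZMod q, f a = ∑ h ∈ Finset.range q, f (h : ZMod q) := by
  apply Finset.sum_nbij' (i := fun (a : ZMod q) => a.val) (j := fun (h : ℕ) => (h : ZMod q))
  · intro a _; exact Finset.mem_range.mpr a.val_lt
  · intro h _; exact Finset.mem_univ _
  · intro a _; exact ZMod.natCast_rightInverse a
  · intro h hh; exact ZMod.val_cast_of_lt (Finset.mem_range.mp hh)
  · intro a _; rw [ZMod.natCast_rightInverse a]

lemma key_shift (q : ℕ) [NeZero q] (p w k : ℤ)
    (hw : ((4 * p * w : ℤ) : ZMod q) = 1) :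
    ∑ h ∈ Finset.range q, Efun q (k * h + p * h ^ 2)
      = Efun q (-(w * k ^ 2)) * ∑ h ∈ Finset.range q, Efun q (p * h ^ 2) := by
  have hw' : 4 * (p : ZMod q) * (w : ZMod q) = 1 := by push_cast at hw; linear_combination hw
  set P : ZMod q := (p : ZMod q)
  set W : ZMod q := (w : ZMod q)
  set K : ZMod q := (k : ZMod q)
  have l1 : ∀ h : ℕ, Efun q (k * h + p * h ^ 2) = Ffun q (K * (h : ZMod q) + P * (h : ZMod q) ^ 2) := by
    intro h
    rw [show (K * (h : ZMod q) + P * (h : ZMod q) ^ 2)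
        = (((k * h + p * h ^ 2 : ℤ)) : ZMod q) by push_cast; ring, Ffun_intCast]
  have l2 : ∀ h : ℕ, Efun q (p * h ^ 2) = Ffun q (P * (h : ZMod q) ^ 2) := by
    intro h
    rw [show (P * (h : ZMod q) ^ 2) = (((p * h ^ 2 : ℤ)) : ZMod q) by push_cast; ring, Ffun_intCast]
  simp only [l1, l2]
  rw [← sum_zmod_eq q (fun a => Ffun q (K * a + P * a ^ 2)),
      ← sum_zmod_eq q (fun a => Ffun q (P * a ^ 2))]
  set t : ZMod q := ((-(2 * w * k) : ℤ) : ZMod q)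
  have hshift := Equiv.sum_comp (Equiv.addRight t) (fun a => Ffun q (K * a + P * a ^ 2))
  rw [← hshift]
  rw [Finset.mul_sum]
  apply Finset.sum_congr rfl
  intro b _
  have harg : K * (Equiv.addRight t b) + P * (Equiv.addRight t b) ^ 2
      = ((-(w * k ^ 2) : ℤ) : ZMod q) + P * b ^ 2 := by
    simp only [Equiv.coe_addRight]
    have ht : t = -(2 * W * K) := by simp only [t, W, K]; push_cast; ring
    rw [ht]
    push_cast
    linear_combination (W * K ^ 2 - K * b) * hw'
  rw [harg, Ffun_add, Ffun_intCast]

/-- Functional equation for odd `q`: `g_φ(p,q) = g₁(p,q) · G_φ(-(4p)⁻¹/q)`. -/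
theorem stmt_14 (q : ℕ) (hq0 : 0 < q) (hq : Odd q) (p : ℤ)
    (hp : Int.gcd p (q : ℤ) = 1)
    (w : ℤ) (hw : 4 * p * w ≡ 1 [ZMOD (q : ℤ)])
    (φ : ℝ → ℂ) (c : ℤ → ℂ)
    (hc : Summable fun k : ℤ => (k : ℝ) ^ 2 * ‖c k‖)
    (hφ : ∀ x : ℝ, HasSum (fun k : ℤ => c k * Complex.exp (2 * Real.pi * Complex.I * (k : ℂ) * (x : ℂ))) (φ x)) :
    ∑ h ∈ Finset.range q, φ ((h : ℝ) / q) *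
        Complex.exp (2 * Real.pi * Complex.I * (p : ℂ) * (h : ℂ) ^ 2 / q)
      = (∑ h ∈ Finset.range q,
          Complex.exp (2 * Real.pi * Complex.I * (p : ℂ) * (h : ℂ) ^ 2 / q)) *
        ∑' n : ℤ, c n *
          Complex.exp (2 * Real.pi * Complex.I * (n : ℂ) ^ 2 * (-(w : ℂ) / q)) := by
  haveI : NeZero q := ⟨hq0.ne'⟩
  have hqC : (q : ℂ) ≠ 0 := Nat.cast_ne_zero.mpr hq0.ne'
  have hwZ : ((4 * p * w : ℤ) : ZMod q) = 1 := by
    rw [show (1 : ZMod q) = ((1 : ℤ) : ZMod q) by push_cast; rfl]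
    exact (ZMod.intCast_eq_intCast_iff _ _ _).mpr hw
  -- per-h HasSum
  have hHS : ∀ h : ℕ, HasSum (fun k : ℤ => c k * Efun q (k * h + p * h ^ 2))
      (φ ((h : ℝ) / q) * Complex.exp (2 * Real.pi * Complex.I * (p : ℂ) * (h : ℂ) ^ 2 / q)) := by
    intro h
    have := (hφ ((h : ℝ) / q)).mul_right
      (Complex.exp (2 * Real.pi * Complex.I * (p : ℂ) * (h : ℂ) ^ 2 / q))
    convert this using 2 with k
    · rfl
    rw [mul_assoc, Efun, ← Complex.exp_add]
    congr 1
    push_cast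
    field_simp
  have step1 : ∑ h ∈ Finset.range q, φ ((h : ℝ) / q) *
        Complex.exp (2 * Real.pi * Complex.I * (p : ℂ) * (h : ℂ) ^ 2 / q)
      = ∑' k : ℤ, ∑ h ∈ Finset.range q, c k * Efun q (k * h + p * h ^ 2) := by
    rw [Summable.tsum_finsetSum (fun h _ => (hHS h).summable)]
    exact Finset.sum_congr rfl fun h _ => ((hHS h).tsum_eq).symm
  rw [step1]
  have step2 : ∀ k : ℤ, ∑ h ∈ Finset.range q, c k * Efun q (k * h + p * h ^ 2)
      = c k * Complex.exp (2 * Real.pi * Complex.I * (k : ℂ) ^ 2 * (-(w : ℂ) / q)) *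
        ∑ h ∈ Finset.range q,
          Complex.exp (2 * Real.pi * Complex.I * (p : ℂ) * (h : ℂ) ^ 2 / q) := by
    intro k
    rw [← Finset.mul_sum, key_shift q p w k hwZ, ← mul_assoc]
    congr 1
    · congr 1
      rw [Efun]
      congr 1
      push_cast
      ring
    · apply Finset.sum_congr rfl
      intro h _
      rw [Efun]
      congr 1
      push_cast
      ring
  calc ∑' k : ℤ, ∑ h ∈ Finset.range q, c k * Efun q (k * h + p * h ^ 2)
      = ∑' k : ℤ, (c k * Complex.exp (2 * Real.pi * Complex.I * (k : ℂ) ^ 2 * (-(w : ℂ) / q)) *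
          ∑ h ∈ Finset.range q,
            Complex.exp (2 * Real.pi * Complex.I * (p : ℂ) * (h : ℂ) ^ 2 / q)) :=
        tsum_congr step2
    _ = _ := by rw [tsum_mul_right, mul_comm]
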